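/- A subspace L of the matrix algebra M_n(ℂ) (n ≥ 2) is a Lie ideal (i.e., [L, M_n(ℂ)] ⊆ L) if and only if L is one of: (0), ℂ·I_n, sl_n (trace-zero matrices), or M_n(ℂ). -/

import Mathlib

open Matrix

namespace LieIdealsAux

variable {n : ℕ}

noncomputable abbrev E (i j : Fin n) : Matrix (Fin n) (Fin n) ℂ := Matrix.single i j 1

lemma sandwich {i j : Fin n} (y : Matrix (Fin n) (Fin n) ℂ) :
    E j i * y * E j i = y i j • E j i := by
  ext a b
  by_cases hb : b = i
  · subst hb
    by_cases ha : a = j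
    · subst ha; simp [Matrix.smul_apply, mul_comm]
    · simp [Matrix.mul_apply, Matrix.smul_apply, Matrix.single, ha, Ne.symm ha]
  · simp [Matrix.mul_apply, Matrix.smul_apply, Matrix.single, hb, Ne.symm hb]

lemma double_bracket {i j : Fin n} (hij : i ≠ j) (y : Matrix (Fin n) (Fin n) ℂ) :
    (y * E j i - E j i * y) * E j i - E j i * (y * E j i - E j i * y)
      = (-2 * y i j) • E j i := by
  have hEE : (E j i : Matrix (Fin n) (Fin n) ℂ) * E j i = 0 :=
    single_mul_single_of_ne _ _ _ _ hij _
  rw [sub_mul, mul_sub, ← mul_assoc (E j i) y, ← mul_assoc (E j i) (E j i), hEE, zero_mul,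
    mul_assoc y, hEE, mul_zero, sandwich]
  module

lemma gen (L : Submodule ℂ (Matrix (Fin n) (Fin n) ℂ))
    (hL : ∀ x ∈ L, ∀ a : Matrix (Fin n) (Fin n) ℂ, x * a - a * x ∈ L)
    {p q : Fin n} (hpq : p ≠ q) (hE : E p q ∈ L) :
    ∀ k l : Fin n, k ≠ l → E k l ∈ L := by
  have hkq : ∀ k : Fin n, k ≠ q → E k q ∈ L := by
    intro k hk
    have h := hL _ hE (E k p)
    have e : E p q * E k p - E k p * E p q = -(E k q) := by simp [hk.symm]
    rw [e] at h
    exact neg_mem_iff.mp h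
  have hd : E p p - E q q ∈ L := by
    have h := hL _ hE (E q p)
    have e : E p q * E q p - E q p * E p q = E p p - E q q := by simp
    rwa [e] at h
  have hqp : E q p ∈ L := by
    have h := hL _ hd (E q p)
    have e : (E p p - E q q) * E q p - E q p * (E p p - E q q) = (-2 : ℂ) • E q p := by
      rw [sub_mul, mul_sub]
      simp [hpq, hpq.symm]
      rw [show (2:ℂ) = 1 + 1 by norm_num, Matrix.single_add]
      abel
    rw [e] at h
    have h2 := L.smul_mem ((-2 : ℂ)⁻¹) h
    rw [smul_smul] at h2
    norm_num at h2
    exact h2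
  intro k l hkl
  by_cases hlq : l = q
  · subst hlq; exact hkq k hkl
  by_cases hkq' : k = q
  · rw [hkq']
    have hlq2 : l ≠ q := hlq
    by_cases hlp : l = p
    · rw [hlp]; exact hqp
    · have hpl : E p l ∈ L := by
        have h := hL _ hE (E q l)
        have e : E p q * E q l - E q l * E p q = E p l := by
          rw [single_mul_single_same, one_mul, single_mul_single_of_ne (1:ℂ) q l p hlp 1, sub_zero]
        rwa [e] at h
      have h := hL _ hpl (E q p)
      have e : E p l * E q p - E q p * E p l = -(E q l) := by
        rw [single_mul_single_of_ne (1:ℂ) p l q hlq2 1, single_mul_single_same, one_mul, zero_sub]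
      rw [e] at h
      exact neg_mem_iff.mp h
  · have h := hL _ (hkq k hkq') (E q l)
    have e : E k q * E q l - E q l * E k q = E k l := by
      rw [single_mul_single_same, one_mul,
        single_mul_single_of_ne (1:ℂ) q l k (fun h => hkl h.symm) 1, sub_zero]
    rwa [e] at h

lemma sl_le (L : Submodule ℂ (Matrix (Fin n) (Fin n) ℂ))
    (hL : ∀ x ∈ L, ∀ a : Matrix (Fin n) (Fin n) ℂ, x * a - a * x ∈ L)
    (hgen : ∀ k l : Fin n, k ≠ l → E k l ∈ L) (hn : 0 < n) :
    ∀ x : Matrix (Fin n) (Fin n) ℂ, Matrix.trace x = 0 → x ∈ L := by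
  intro x hx
  set z : Fin n := ⟨0, hn⟩ with hz
  have hdiag : ∀ i : Fin n, E i i - E z z ∈ L := by
    intro i
    by_cases hiz : i = z
    · subst hiz; simpa using L.zero_mem
    · have h := hL _ (hgen i z hiz) (E z i)
      have e : E i z * E z i - E z i * E i z = E i i - E z z := by simp
      rwa [e] at h
  have hsum : x = ∑ i : Fin n, ∑ j : Fin n,
      (if i = j then x i i • (E i i - E z z) else x i j • E i j) := by
    have h1 : ∀ i : Fin n, (∑ j : Fin n,
        (if i = j then x i i • (E i i - E z z) else x i j • E i j))
        = (∑ j : Fin n, x i j • E i j) - x i i • E z z := by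
      intro i
      calc (∑ j : Fin n, (if i = j then x i i • (E i i - E z z) else x i j • E i j))
          = ∑ j : Fin n, ((x i j • E i j) - (if i = j then x i i • E z z else 0)) := by
            refine Finset.sum_congr rfl fun j _ => ?_
            by_cases hij : i = j
            · subst hij; simp [smul_sub]
            · simp [hij]
        _ = (∑ j : Fin n, x i j • E i j) - ∑ j : Fin n, (if i = j then x i i • E z z else 0) :=
            Finset.sum_sub_distrib _ _
        _ = (∑ j : Fin n, x i j • E i j) - x i i • E z z := by
            rw [Finset.sum_ite_eq]; simp
    calc x = ∑ i : Fin n, ∑ j : Fin n, x i j • E i j := by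
            nth_rewrite 1 [matrix_eq_sum_single x]
            refine Finset.sum_congr rfl fun i _ => Finset.sum_congr rfl fun j _ => ?_
            rw [smul_single, smul_eq_mul, mul_one]
      _ = (∑ i : Fin n, ∑ j : Fin n, x i j • E i j) - Matrix.trace x • E z z := by
            rw [hx, zero_smul, sub_zero]
      _ = ∑ i : Fin n, ((∑ j : Fin n, x i j • E i j) - x i i • E z z) := by
            rw [Finset.sum_sub_distrib]
            congr 1
            rw [Matrix.trace, ← Finset.sum_smul]
            rfl
      _ = ∑ i : Fin n, ∑ j : Fin n,
            (if i = j then x i i • (E i i - E z z) else x i j • E i j) := by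
            exact (Finset.sum_congr rfl fun i _ => (h1 i).symm)
  rw [hsum]
  refine L.sum_mem fun i _ => L.sum_mem fun j _ => ?_
  by_cases hij : i = j
  · simp only [hij, if_pos rfl]
    exact L.smul_mem _ (hdiag j)
  · simp only [if_neg hij]
    exact L.smul_mem _ (hgen i j hij)

end LieIdealsAux

open LieIdealsAux in
/-- A subspace `L` of `Mₙ(ℂ)` (`n ≥ 2`) is a Lie ideal iff it is
`(0)`, `ℂ·Iₙ`, `slₙ` or `Mₙ(ℂ)`. -/
theorem lie_ideals_of_matrix_algebra (n : ℕ) (hn : 2 ≤ n)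
    (L : Submodule ℂ (Matrix (Fin n) (Fin n) ℂ)) :
    (∀ x ∈ L, ∀ a : Matrix (Fin n) (Fin n) ℂ, x * a - a * x ∈ L) ↔
      L = ⊥ ∨ L = Submodule.span ℂ {(1 : Matrix (Fin n) (Fin n) ℂ)} ∨
      L = LinearMap.ker (Matrix.traceLinearMap (Fin n) ℂ ℂ) ∨ L = ⊤ := by
  have hn0 : 0 < n := by omega
  constructor
  · intro hL
    by_cases hscal : ∀ y ∈ L, ∀ i j : Fin n, i ≠ j → y i j = 0
    · -- every element of L is scalar: L ≤ ℂ·1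
      have hle : L ≤ Submodule.span ℂ {(1 : Matrix (Fin n) (Fin n) ℂ)} := by
        intro x hxL
        have hconst : ∀ i j : Fin n, x i i = x j j := by
          intro i j
          by_cases hij : i = j
          · rw [hij]
          · have h := hL x hxL (E i j)
            have h2 := hscal _ h i j hij
            have e : (x * E i j - E i j * x) i j = x i i - x j j := by
              simp [Matrix.sub_apply]
            rw [e] at h2
            exact sub_eq_zero.mp h2
        have hx1 : x = x ⟨0, hn0⟩ ⟨0, hn0⟩ • 1 := by
          ext a b
          by_cases hab : a = b
          · subst hab
            simp [Matrix.smul_apply, Matrix.one_apply, hconst a ⟨0, hn0⟩]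
          · simp [Matrix.smul_apply, Matrix.one_apply, hab, hscal x hxL a b hab]
        rw [hx1]
        exact Submodule.smul_mem _ _ (Submodule.mem_span_singleton_self _)
      by_cases hbot : L = ⊥
      · exact Or.inl hbot
      · right; left
        obtain ⟨x, hxL, hx0⟩ := Submodule.exists_mem_ne_zero_of_ne_bot hbot
        refine le_antisymm hle ?_
        obtain ⟨c, hc⟩ := Submodule.mem_span_singleton.mp (hle hxL)
        have hc0 : c ≠ 0 := by rintro rfl; simp at hc; exact hx0 hc.symm
        rw [Submodule.span_singleton_le_iff_mem]
        have : (1 : Matrix (Fin n) (Fin n) ℂ) = c⁻¹ • x := by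
          rw [← hc, smul_smul, inv_mul_cancel₀ hc0, one_smul]
        rw [this]
        exact L.smul_mem _ hxL
    · -- L contains an element with a nonzero off-diagonal entry
      push_neg at hscal
      obtain ⟨y, hyL, i, j, hij, hyij⟩ := hscal
      -- derive E j i ∈ L
      have h1 := hL y hyL (E j i)
      have h2 := hL _ h1 (E j i)
      rw [double_bracket hij] at h2
      have hEji : E j i ∈ L := by
        have h3 := L.smul_mem ((-2 * y i j)⁻¹) h2
        rw [smul_smul, inv_mul_cancel₀ (by simpa using hyij), one_smul] at h3
        exact h3
      have hgen := gen L hL (Ne.symm hij) hEji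
      have hsl := sl_le L hL hgen hn0
      by_cases htr : ∀ x ∈ L, Matrix.trace x = 0
      · right; right; left
        refine le_antisymm (fun x hx => ?_) (fun x hx => ?_)
        · exact LinearMap.mem_ker.mpr (htr x hx)
        · exact hsl x (LinearMap.mem_ker.mp hx)
      · right; right; right
        push_neg at htr
        obtain ⟨t, htL, ht0⟩ := htr
        have hone : (1 : Matrix (Fin n) (Fin n) ℂ) ∈ L := by
          have hmem : t - (Matrix.trace t / n) • 1 ∈ L := by
            apply hsl
            rw [Matrix.trace_sub, Matrix.trace_smul, Matrix.trace_one, Fintype.card_fin, smul_eq_mul]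
            have hnn : (n : ℂ) ≠ 0 := by
              exact_mod_cast Nat.cast_ne_zero.mpr (by omega)
            field_simp
            ring
          have h4 : (Matrix.trace t / n) • (1 : Matrix (Fin n) (Fin n) ℂ) ∈ L := by
            have := L.sub_mem htL hmem
            simpa using this
          have h5 := L.smul_mem ((Matrix.trace t / n)⁻¹) h4
          rw [smul_smul, inv_mul_cancel₀, one_smul] at h5
          · exact h5
          · have hnn : (n : ℂ) ≠ 0 := by
              exact_mod_cast Nat.cast_ne_zero.mpr (by omega)
            exact div_ne_zero ht0 hnn
        rw [eq_top_iff]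
        intro x _
        have hmem : x - (Matrix.trace x / n) • 1 ∈ L := by
          apply hsl
          rw [Matrix.trace_sub, Matrix.trace_smul, Matrix.trace_one, Fintype.card_fin, smul_eq_mul]
          have hnn : (n : ℂ) ≠ 0 := by
            exact_mod_cast Nat.cast_ne_zero.mpr (by omega)
          field_simp
          ring
        have := L.add_mem hmem (L.smul_mem (Matrix.trace x / n) hone)
        simpa using this
  · rintro (rfl | rfl | rfl | rfl) <;> intro x hx a
    · simp only [Submodule.mem_bot] at hx ⊢
      subst hx; simp
    · obtain ⟨c, hc⟩ := Submodule.mem_span_singleton.mp hx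
      rw [← hc]
      have : (c • (1 : Matrix (Fin n) (Fin n) ℂ)) * a - a * (c • 1) = 0 := by
        simp [smul_mul_assoc, mul_smul_comm]
      rw [this]
      exact Submodule.zero_mem _
    · rw [LinearMap.mem_ker] at hx ⊢
      simp [Matrix.trace_sub, Matrix.trace_mul_comm x a]
    · trivial
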